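/- Let Δ be an additive subgroup of ℂ, φ: Δ → ℂ an additive group homomorphism, λ ∈ ℂ, and 0 ≠ b ∈ ℂ. On the vector space A with basis {x_{α,i} : α ∈ Δ, i ∈ ℕ}, define [x_{α,i}, x_{β,j}] = (1/b)((α+b)φ(β) − (β+b)φ(α)) x_{α+β, i+j} + (1/b)(i(φ(β) − λ(β+b)) + j(λ(α+b) − φ(α))) x_{α+β, i+j−1} and x_{α,i} ∘ x_{β,j} = (β+b) x_{α+β,i+j} + j x_{α+β, i+j−1} (terms with negative second index are zero). Then [·,·] is a Lie bracket, ∘ is a Novikov product, and the pair satisfies the Gel'fand–Dorfman compatibility [w∘u,v] − [w∘v,u] + [w,u]∘v − [w,v]∘u − w∘[u,v] = 0. -/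

import Mathlib

open Finsupp

@[simp] lemma GD_nat1 (n m : ℕ) : n + 1 + m - 1 = n + m := by omega
@[simp] lemma GD_nat2 (n m : ℕ) : n + (m + 1) - 1 = n + m := by omega
@[simp] lemma GD_nat3 (n m : ℕ) : n + 1 + m = n + m + 1 := by omega
@[simp] lemma GD_nat4 (n m : ℕ) : n + (m + 1) = n + m + 1 := by omega

lemma GD_lin_of_basis {G : Type*} (T : AddMonoidAlgebra ℂ G →ₗ[ℂ] AddMonoidAlgebra ℂ G)
    (h : ∀ p, T (AddMonoidAlgebra.single p 1) = 0) : ∀ u, T u = 0 := by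
  intro u
  induction u using AddMonoidAlgebra.induction_linear with
  | zero => simp
  | add f g hf hg => simp [hf, hg]
  | single p c =>
    rw [show AddMonoidAlgebra.single p c = c • AddMonoidAlgebra.single p (1:ℂ) by
      rw [AddMonoidAlgebra.smul_single', mul_one]]
    simp only [map_smul, h, smul_zero]

lemma GD_bi_of_basis {G : Type*}
    (T : AddMonoidAlgebra ℂ G →ₗ[ℂ] AddMonoidAlgebra ℂ G →ₗ[ℂ] AddMonoidAlgebra ℂ G)
    (h : ∀ p q, T (AddMonoidAlgebra.single p 1) (AddMonoidAlgebra.single q 1) = 0) :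
    ∀ u v, T u v = 0 := by
  intro u v
  induction u using AddMonoidAlgebra.induction_linear with
  | zero => simp
  | add f g hf hg => simp [hf, hg]
  | single p c =>
    induction v using AddMonoidAlgebra.induction_linear with
    | zero => simp
    | add f g hf hg => simp [hf, hg]
    | single q d =>
      rw [show AddMonoidAlgebra.single p c = c • AddMonoidAlgebra.single p (1:ℂ) by
            rw [AddMonoidAlgebra.smul_single', mul_one],
          show AddMonoidAlgebra.single q d = d • AddMonoidAlgebra.single q (1:ℂ) by
            rw [AddMonoidAlgebra.smul_single', mul_one]]
      simp only [map_smul, LinearMap.smul_apply, h, smul_zero]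

section GD
variable (Δ : AddSubgroup ℂ) (φ : Δ →+ ℂ) (lam b : ℂ)

local notation "A" => AddMonoidAlgebra ℂ (Δ × ℕ)

/-- the derivation d₁ -/
noncomputable def GDd1 : A →ₗ[ℂ] A :=
  (Finsupp.lsum ℂ fun p : Δ × ℕ => LinearMap.toSpanSingleton ℂ A
    (φ p.1 • AddMonoidAlgebra.single p 1 +
      (lam * p.2) • AddMonoidAlgebra.single (p.1, p.2 - 1) 1)) ∘ₗ
    (AddMonoidAlgebra.coeffLinearEquiv ℂ).toLinearMap

/-- the operator D = d₂ + b -/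
noncomputable def GDD : A →ₗ[ℂ] A :=
  (Finsupp.lsum ℂ fun p : Δ × ℕ => LinearMap.toSpanSingleton ℂ A
    (((p.1 : ℂ) + b) • AddMonoidAlgebra.single p 1 +
      (p.2 : ℂ) • AddMonoidAlgebra.single (p.1, p.2 - 1) 1)) ∘ₗ
    (AddMonoidAlgebra.coeffLinearEquiv ℂ).toLinearMap

lemma GDd1_single (p : Δ × ℕ) :
    GDd1 Δ φ lam (AddMonoidAlgebra.single p 1) =
      φ p.1 • AddMonoidAlgebra.single p 1 +
        (lam * p.2) • AddMonoidAlgebra.single (p.1, p.2 - 1) 1 := by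
  rw [GDd1, LinearMap.comp_apply, LinearEquiv.coe_coe, AddMonoidAlgebra.coeffLinearEquiv_apply,
    AddMonoidAlgebra.coeff_single]
  exact (Finsupp.lsum_single _ _ _ _).trans (LinearMap.toSpanSingleton_apply_one _ _ _)

lemma GDD_single (p : Δ × ℕ) :
    GDD Δ b (AddMonoidAlgebra.single p 1) =
      ((p.1 : ℂ) + b) • AddMonoidAlgebra.single p 1 +
        (p.2 : ℂ) • AddMonoidAlgebra.single (p.1, p.2 - 1) 1 := by
  rw [GDD, LinearMap.comp_apply, LinearEquiv.coe_coe, AddMonoidAlgebra.coeffLinearEquiv_apply,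
    AddMonoidAlgebra.coeff_single]
  exact (Finsupp.lsum_single _ _ _ _).trans (LinearMap.toSpanSingleton_apply_one _ _ _)

lemma GDd1_mul (x y : A) :
    GDd1 Δ φ lam (x * y) = x * GDd1 Δ φ lam y + y * GDd1 Δ φ lam x := by
  have h : ∀ u v : A,
      ((LinearMap.mul ℂ A).compr₂ (GDd1 Δ φ lam) - (LinearMap.mul ℂ A).compl₂ (GDd1 Δ φ lam)
        - ((LinearMap.mul ℂ A).compl₂ (GDd1 Δ φ lam)).flip) u v = 0 := by
    refine GD_bi_of_basis _ ?_
    rintro ⟨α, i⟩ ⟨β, j⟩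
    simp only [LinearMap.sub_apply, LinearMap.compr₂_apply, LinearMap.compl₂_apply,
      LinearMap.flip_apply, LinearMap.mul_apply']
    rw [AddMonoidAlgebra.single_mul_single, one_mul]
    simp only [GDd1_single, mul_add, mul_smul_comm, AddMonoidAlgebra.single_mul_single, mul_one,
      Prod.mk_add_mk]
    rcases i with _ | i <;> rcases j with _ | j <;>
      simp only [Prod.mk_add_mk, GD_nat1, GD_nat2, GD_nat3, GD_nat4, Nat.add_zero, Nat.zero_add, Nat.zero_sub, Nat.add_sub_cancel,
        Nat.sub_zero, Nat.cast_zero, Nat.cast_add, Nat.cast_one,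
        map_add, AddSubgroup.coe_add] <;>
      simp only [add_comm, add_left_comm, add_assoc] <;>
      push_cast <;> module
  have h2 := h x y
  simp only [LinearMap.sub_apply, LinearMap.compr₂_apply, LinearMap.compl₂_apply,
    LinearMap.flip_apply, LinearMap.mul_apply'] at h2
  linear_combination (norm := ring_nf) h2

lemma GDD_mul (x y : A) :
    GDD Δ b (x * y) = x * GDD Δ b y + y * GDD Δ b x - algebraMap ℂ A b * (x * y) := by
  have h : ∀ u v : A,
      ((LinearMap.mul ℂ A).compr₂ (GDD Δ b) - (LinearMap.mul ℂ A).compl₂ (GDD Δ b)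
        - ((LinearMap.mul ℂ A).compl₂ (GDD Δ b)).flip + b • (LinearMap.mul ℂ A)) u v = 0 := by
    refine GD_bi_of_basis _ ?_
    rintro ⟨α, i⟩ ⟨β, j⟩
    simp only [LinearMap.add_apply, LinearMap.sub_apply, LinearMap.compr₂_apply,
      LinearMap.compl₂_apply, LinearMap.flip_apply, LinearMap.smul_apply, LinearMap.mul_apply']
    rw [AddMonoidAlgebra.single_mul_single, one_mul]
    simp only [GDD_single, mul_add, mul_smul_comm, AddMonoidAlgebra.single_mul_single, mul_one,
      Prod.mk_add_mk]
    rcases i with _ | i <;> rcases j with _ | j <;>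
      simp only [Prod.mk_add_mk, GD_nat1, GD_nat2, GD_nat3, GD_nat4, Nat.add_zero, Nat.zero_add, Nat.zero_sub, Nat.add_sub_cancel,
        Nat.sub_zero, Nat.cast_zero, Nat.cast_add, Nat.cast_one,
        map_add, AddSubgroup.coe_add] <;>
      simp only [add_comm, add_left_comm, add_assoc] <;>
      push_cast <;> module
  have h2 := h x y
  simp only [LinearMap.add_apply, LinearMap.sub_apply, LinearMap.compr₂_apply,
    LinearMap.compl₂_apply, LinearMap.flip_apply, LinearMap.smul_apply,
    LinearMap.mul_apply'] at h2
  rw [Algebra.smul_def] at h2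
  linear_combination (norm := ring_nf) h2

lemma GDcomm (x : A) : GDD Δ b (GDd1 Δ φ lam x) = GDd1 Δ φ lam (GDD Δ b x) := by
  have h : ∀ u : A,
      ((GDD Δ b) ∘ₗ (GDd1 Δ φ lam) - (GDd1 Δ φ lam) ∘ₗ (GDD Δ b)) u = 0 := by
    refine GD_lin_of_basis _ ?_
    rintro ⟨α, i⟩
    simp only [LinearMap.sub_apply, LinearMap.comp_apply, GDd1_single, GDD_single,
      map_add, map_smul, GDd1_single, GDD_single]
    module
  have h2 := h x
  rw [LinearMap.sub_apply, LinearMap.comp_apply, LinearMap.comp_apply, sub_eq_zero] at h2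
  exact h2

lemma GDd1_C (c : ℂ) (x : A) :
    GDd1 Δ φ lam (algebraMap ℂ A c * x) = algebraMap ℂ A c * GDd1 Δ φ lam x := by
  rw [← Algebra.smul_def, ← Algebra.smul_def, map_smul]

lemma GDD_C (c : ℂ) (x : A) :
    GDD Δ b (algebraMap ℂ A c * x) = algebraMap ℂ A c * GDD Δ b x := by
  rw [← Algebra.smul_def, ← Algebra.smul_def, map_smul]

lemma GDD_alg (c : ℂ) :
    GDD Δ b (algebraMap ℂ A c) = algebraMap ℂ A b * algebraMap ℂ A c := by
  have h1 : (algebraMap ℂ A c) = c • AddMonoidAlgebra.single (0 : Δ × ℕ) 1 := by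
    rw [Algebra.algebraMap_eq_smul_one]; rfl
  rw [h1, map_smul, GDD_single]
  simp only [Prod.fst_zero, Prod.snd_zero, ZeroMemClass.coe_zero, Nat.cast_zero, zero_add, zero_smul, add_zero]
  rw [← Algebra.smul_def]
  exact smul_comm c b _

lemma GDd1_alg (c : ℂ) : GDd1 Δ φ lam (algebraMap ℂ A c) = 0 := by
  have h1 : (algebraMap ℂ A c) = c • AddMonoidAlgebra.single (0 : Δ × ℕ) 1 := by
    rw [Algebra.algebraMap_eq_smul_one]; rfl
  rw [h1, map_smul, GDd1_single]
  simp [Prod.fst_zero, Prod.snd_zero]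

/-- the Novikov product -/
noncomputable def GDcirc : A →ₗ[ℂ] A →ₗ[ℂ] A := (LinearMap.mul ℂ A).compl₂ (GDD Δ b)

/-- the Lie bracket -/
noncomputable def GDbr : A →ₗ[ℂ] A →ₗ[ℂ] A :=
  (1 / b) • ((LinearMap.mul ℂ A).compl₁₂ (GDD Δ b) (GDd1 Δ φ lam)
    - (LinearMap.mul ℂ A).compl₁₂ (GDd1 Δ φ lam) (GDD Δ b))

lemma GDcirc_apply (x y : A) : GDcirc Δ b x y = x * GDD Δ b y := rfl

lemma GDbr_apply (x y : A) :
    GDbr Δ φ lam b x y = algebraMap ℂ A (1 / b) *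
      (GDD Δ b x * GDd1 Δ φ lam y - GDd1 Δ φ lam x * GDD Δ b y) := by
  simp only [GDbr, LinearMap.smul_apply, LinearMap.sub_apply, LinearMap.compl₁₂_apply,
    LinearMap.mul_apply']
  rw [Algebra.smul_def]

lemma GDconj1 : ∀ (α β : Δ) (i j : ℕ),
    GDbr Δ φ lam b (AddMonoidAlgebra.single (α, i) 1) (AddMonoidAlgebra.single (β, j) 1) =
      ((1 / b) * (((α : ℂ) + b) * φ β - ((β : ℂ) + b) * φ α)) •
        AddMonoidAlgebra.single (α + β, i + j) 1 +
      ((1 / b) * ((i : ℂ) * (φ β - lam * ((β : ℂ) + b)) +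
        (j : ℂ) * (lam * ((α : ℂ) + b) - φ α))) •
        AddMonoidAlgebra.single (α + β, i + j - 1) 1 := by
  intro α β i j
  rw [GDbr_apply, ← Algebra.smul_def]
  simp only [GDD_single, GDd1_single, mul_sub, mul_add, add_mul, sub_mul, smul_mul_assoc,
    mul_smul_comm, AddMonoidAlgebra.single_mul_single, mul_one, one_mul, smul_smul,
    smul_sub, smul_add]
  rcases i with _ | i <;> rcases j with _ | j <;>
    simp only [Prod.mk_add_mk, GD_nat1, GD_nat2, GD_nat3, GD_nat4, Nat.add_zero, Nat.zero_add, Nat.zero_sub,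
      Nat.add_sub_cancel, Nat.sub_zero, Nat.cast_zero, Nat.cast_add, Nat.cast_one] <;>
    push_cast <;> module

lemma GDconj2 : ∀ (α β : Δ) (i j : ℕ),
    GDcirc Δ b (AddMonoidAlgebra.single (α, i) 1) (AddMonoidAlgebra.single (β, j) 1) =
      ((β : ℂ) + b) • AddMonoidAlgebra.single (α + β, i + j) 1 +
      (j : ℂ) • AddMonoidAlgebra.single (α + β, i + j - 1) 1 := by
  intro α β i j
  rw [GDcirc_apply]
  simp only [GDD_single, mul_add, mul_smul_comm, AddMonoidAlgebra.single_mul_single, mul_one,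
    Prod.mk_add_mk]
  rcases i with _ | i <;> rcases j with _ | j <;>
    simp only [GD_nat1, GD_nat2, GD_nat3, GD_nat4, Nat.add_zero, Nat.zero_add, Nat.zero_sub,
      Nat.add_sub_cancel, Nat.sub_zero, Nat.cast_zero, Nat.cast_add, Nat.cast_one] <;>
    push_cast <;> module

lemma GDconj3 : ∀ u : A, GDbr Δ φ lam b u u = 0 := by
  intro u
  rw [GDbr_apply]; ring

lemma GDconj4 : ∀ u v w : A,
    GDbr Δ φ lam b (GDbr Δ φ lam b u v) w + GDbr Δ φ lam b (GDbr Δ φ lam b v w) u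
      + GDbr Δ φ lam b (GDbr Δ φ lam b w u) v = 0 := by
  intro u v w
  simp only [GDbr_apply, map_sub, map_mul, GDd1_mul, GDD_mul, GDd1_alg, GDD_alg, GDcomm]
  ring

lemma GDconj5 : ∀ u v w : A,
    GDcirc Δ b (GDcirc Δ b u v) w = GDcirc Δ b (GDcirc Δ b u w) v := by
  intro u v w
  simp only [GDcirc_apply]
  ring

lemma GDconj6 : ∀ u v w : A,
    GDcirc Δ b (GDcirc Δ b u v) w - GDcirc Δ b u (GDcirc Δ b v w)
      = GDcirc Δ b (GDcirc Δ b v u) w - GDcirc Δ b v (GDcirc Δ b u w) := by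
  intro u v w
  simp only [GDcirc_apply, GDD_mul, GDD_alg]
  ring

lemma GDconj7 : ∀ u v w : A,
    GDbr Δ φ lam b (GDcirc Δ b w u) v - GDbr Δ φ lam b (GDcirc Δ b w v) u
      + GDcirc Δ b (GDbr Δ φ lam b w u) v - GDcirc Δ b (GDbr Δ φ lam b w v) u
      - GDcirc Δ b w (GDbr Δ φ lam b u v) = 0 := by
  intro u v w
  simp only [GDbr_apply, GDcirc_apply, map_sub, map_mul, GDd1_mul, GDD_mul, GDd1_alg,
    GDD_alg, GDcomm]
  ring

end GD

/-- For an additive homomorphism φ : Δ → ℂ, λ ∈ ℂ and 0 ≠ b ∈ ℂ, the stated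
bracket and Novikov product on the free space with basis
{x_{α,i} : α ∈ Δ, i ∈ ℕ} form a Gel'fand–Dorfman bialgebra. -/
theorem stmt_17 (Δ : AddSubgroup ℂ) (φ : Δ →+ ℂ) (lam b : ℂ) (hb : b ≠ 0) :
    ∃ br circ : ((Δ × ℕ) →₀ ℂ) →ₗ[ℂ] ((Δ × ℕ) →₀ ℂ) →ₗ[ℂ] ((Δ × ℕ) →₀ ℂ),
      (∀ (α β : Δ) (i j : ℕ), br (single (α, i) 1) (single (β, j) 1) =
        ((1 / b) * (((α : ℂ) + b) * φ β - ((β : ℂ) + b) * φ α)) •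
          single (α + β, i + j) 1 +
        ((1 / b) * ((i : ℂ) * (φ β - lam * ((β : ℂ) + b)) +
          (j : ℂ) * (lam * ((α : ℂ) + b) - φ α))) •
          single (α + β, i + j - 1) 1) ∧
      (∀ (α β : Δ) (i j : ℕ), circ (single (α, i) 1) (single (β, j) 1) =
        ((β : ℂ) + b) • single (α + β, i + j) 1 +
        (j : ℂ) • single (α + β, i + j - 1) 1) ∧
      (∀ u, br u u = 0) ∧
      (∀ u v w, br (br u v) w + br (br v w) u + br (br w u) v = 0) ∧
      (∀ u v w, circ (circ u v) w = circ (circ u w) v) ∧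
      (∀ u v w,
        circ (circ u v) w - circ u (circ v w) =
        circ (circ v u) w - circ v (circ u w)) ∧
      (∀ u v w,
        br (circ w u) v - br (circ w v) u + circ (br w u) v - circ (br w v) u -
          circ w (br u v) = 0) := by
  let e : AddMonoidAlgebra ℂ (Δ × ℕ) ≃ₗ[ℂ] ((Δ × ℕ) →₀ ℂ) := AddMonoidAlgebra.coeffLinearEquiv ℂ
  refine ⟨((GDbr Δ φ lam b).compl₁₂ e.symm.toLinearMap e.symm.toLinearMap).compr₂ e.toLinearMap,
    ((GDcirc Δ b).compl₁₂ e.symm.toLinearMap e.symm.toLinearMap).compr₂ e.toLinearMap,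
    ?_, ?_, ?_, ?_, ?_, ?_, ?_⟩ <;>
    simp only [LinearMap.compr₂_apply, LinearMap.compl₁₂_apply, LinearEquiv.coe_coe,
      LinearEquiv.symm_apply_apply]
  · intro α β i j
    have h := congrArg e (GDconj1 Δ φ lam b α β i j)
    simpa [e, AddMonoidAlgebra.coeff_single] using h
  · intro α β i j
    have h := congrArg e (GDconj2 Δ b α β i j)
    simpa [e, AddMonoidAlgebra.coeff_single] using h
  · intro u
    rw [GDconj3, map_zero]
  · intro u v w
    rw [← map_add, ← map_add, GDconj4, map_zero]
  · intro u v w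
    rw [GDconj5]
  · intro u v w
    rw [← map_sub, ← map_sub, GDconj6]
  · intro u v w
    rw [← map_sub, ← map_add, ← map_sub, ← map_sub, GDconj7, map_zero]
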